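/- Let y₀ be a stationary strategy satisfying U¹(μ₀,y₀) > U¹(μ,y₀) for every μ ∈ M(m) with μ ≠ μ₀, let ȳ be a stationary strategy satisfying U¹(μ₀,ȳ) ≥ U¹(μ,ȳ) for every μ ∈ M(m), let ε ∈ (0,1], and set y = ε·y₀ + (1−ε)·ȳ (pointwise convex combination of distributions). Define c₁ = min over extreme points μ_e of M(m) with μ_e ≠ μ₀ of (U¹(μ₀,y₀) − U¹(μ_e,y₀)), and c₂ = max over extreme points μ_e of M(m) with μ_e ≠ μ₀ of ‖μ_e − μ₀‖₁. Then c₁ > 0, c₂ > 0, and for every μ ∈ M(m): U¹(μ₀,y) − U¹(μ,y) ≥ (ε·c₁/c₂)·‖μ − μ₀‖₁. -/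
import Mathlib


/-- `μ` is a probability distribution on `S × S` whose two marginals both equal `m`. -/
def IsCopula {S : Type*} [Fintype S] (m : S → ℝ) (μ : S × S → ℝ) : Prop :=
  (∀ q, 0 ≤ μ q) ∧ (∑ q : S × S, μ q = 1) ∧
    (∀ s, ∑ a, μ (s, a) = m s) ∧ (∀ a, ∑ s, μ (s, a) = m a)

/-- The diagonal copula `μ₀`. -/
def mu0 {S : Type*} [DecidableEq S] (m : S → ℝ) : S × S → ℝ :=
  fun q => if q.1 = q.2 then m q.1 else 0

/-- `y` is a stationary strategy: each `y a` is a probability distribution on `B`. -/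
def IsStrategy {S B : Type*} [Fintype B] (y : S → B → ℝ) : Prop :=
  (∀ a b, 0 ≤ y a b) ∧ ∀ a, ∑ b, y a b = 1

/-- `U(μ, y) = Σ_{(s,a)} μ(s,a) Σ_b y(b|a) u(s,b)`. -/
def Upay {S B : Type*} [Fintype S] [Fintype B]
    (u : S × B → ℝ) (μ : S × S → ℝ) (y : S → B → ℝ) : ℝ :=
  ∑ s, ∑ a, μ (s, a) * ∑ b, y a b * u (s, b)

/-- The ℓ¹-distance between two points of `ℝ^(S×S)`. -/
def l1dist {S : Type*} [Fintype S] (μ ν : S × S → ℝ) : ℝ :=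
  ∑ q : S × S, |μ q - ν q|

section aux
variable {S B : Type*} [Fintype S] [Fintype B]

lemma upay_lin (u : S × B → ℝ) (x z : S × S → ℝ) (a b : ℝ) (yy : S → B → ℝ) :
    Upay u (a • x + b • z) yy = a * Upay u x yy + b * Upay u z yy := by
  simp [Upay, Pi.add_apply, Pi.smul_apply, smul_eq_mul, add_mul,
    Finset.sum_add_distrib, Finset.mul_sum, mul_assoc]

lemma upay_ycombo (u : S × B → ℝ) (ν : S × S → ℝ) (ε : ℝ) (y0 ybar y : S → B → ℝ)
    (hy : ∀ a b, y a b = ε * y0 a b + (1 - ε) * ybar a b) :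
    Upay u ν y = ε * Upay u ν y0 + (1 - ε) * Upay u ν ybar := by
  simp only [Upay]
  rw [Finset.mul_sum, Finset.mul_sum, ← Finset.sum_add_distrib]
  refine Finset.sum_congr rfl fun s _ => ?_
  rw [Finset.mul_sum, Finset.mul_sum, ← Finset.sum_add_distrib]
  refine Finset.sum_congr rfl fun a _ => ?_
  simp only [hy, Finset.mul_sum]
  rw [← Finset.sum_add_distrib]
  exact Finset.sum_congr rfl fun b _ => by ring

lemma l1_combo (x z μ0 : S × S → ℝ) (a b : ℝ)
    (ha : 0 ≤ a) (hb : 0 ≤ b) (hab : a + b = 1) :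
    l1dist (a • x + b • z) μ0 ≤ a * l1dist x μ0 + b * l1dist z μ0 := by
  simp only [l1dist, Finset.mul_sum, ← Finset.sum_add_distrib]
  refine Finset.sum_le_sum fun q _ => ?_
  have h : (a • x + b • z) q - μ0 q = a * (x q - μ0 q) + b * (z q - μ0 q) := by
    simp only [Pi.add_apply, Pi.smul_apply, smul_eq_mul]
    linear_combination μ0 q * hab
  rw [h]
  calc |a * (x q - μ0 q) + b * (z q - μ0 q)| ≤ |a * (x q - μ0 q)| + |b * (z q - μ0 q)| :=
        abs_add_le _ _
    _ = a * |x q - μ0 q| + b * |z q - μ0 q| := by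
        rw [abs_mul, abs_mul, abs_of_nonneg ha, abs_of_nonneg hb]

lemma l1dist_nonneg (x z : S × S → ℝ) : 0 ≤ l1dist x z :=
  Finset.sum_nonneg fun q _ => abs_nonneg _

lemma copula_convex (m : S → ℝ) : Convex ℝ {μ : S × S → ℝ | IsCopula m μ} := by
  intro x hx z hz a b ha hb hab
  obtain ⟨hx0, hx1, hx2, hx3⟩ := hx
  obtain ⟨hz0, hz1, hz2, hz3⟩ := hz
  refine ⟨fun q => ?_, ?_, fun s => ?_, fun a' => ?_⟩
  · have : (a • x + b • z) q = a * x q + b * z q := by simp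
    rw [this]; exact add_nonneg (mul_nonneg ha (hx0 q)) (mul_nonneg hb (hz0 q))
  · simp only [Pi.add_apply, Pi.smul_apply, smul_eq_mul, Finset.sum_add_distrib,
      ← Finset.mul_sum, hx1, hz1]; linarith
  · simp only [Pi.add_apply, Pi.smul_apply, smul_eq_mul, Finset.sum_add_distrib,
      ← Finset.mul_sum, hx2 s, hz2 s]; linear_combination m s * hab
  · simp only [Pi.add_apply, Pi.smul_apply, smul_eq_mul, Finset.sum_add_distrib,
      ← Finset.mul_sum, hx3 a', hz3 a']; linear_combination m a' * hab

lemma copula_compact (m : S → ℝ) : IsCompact {μ : S × S → ℝ | IsCopula m μ} := by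
  rw [Metric.isCompact_iff_isClosed_bounded]
  constructor
  · have h1 : IsClosed {μ : S × S → ℝ | ∀ q, 0 ≤ μ q} := by
      have : {μ : S × S → ℝ | ∀ q, 0 ≤ μ q} = ⋂ q, {μ | 0 ≤ μ q} := by ext; simp
      rw [this]
      exact isClosed_iInter fun q => isClosed_le continuous_const (continuous_apply q)
    have h2 : IsClosed {μ : S × S → ℝ | ∑ q : S × S, μ q = 1} :=
      isClosed_eq (continuous_finset_sum _ fun q _ => continuous_apply q) continuous_const
    have h3 : IsClosed {μ : S × S → ℝ | ∀ s, ∑ a, μ (s, a) = m s} := by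
      have : {μ : S × S → ℝ | ∀ s, ∑ a, μ (s, a) = m s}
          = ⋂ s, {μ | ∑ a, μ (s, a) = m s} := by ext; simp
      rw [this]
      exact isClosed_iInter fun s =>
        isClosed_eq (continuous_finset_sum _ fun a _ => continuous_apply (s, a)) continuous_const
    have h4 : IsClosed {μ : S × S → ℝ | ∀ a, ∑ s, μ (s, a) = m a} := by
      have : {μ : S × S → ℝ | ∀ a, ∑ s, μ (s, a) = m a}
          = ⋂ a, {μ | ∑ s, μ (s, a) = m a} := by ext; simp
      rw [this]
      exact isClosed_iInter fun a =>
        isClosed_eq (continuous_finset_sum _ fun s _ => continuous_apply (s, a)) continuous_const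
    have : {μ : S × S → ℝ | IsCopula m μ} = {μ : S × S → ℝ | ∀ q, 0 ≤ μ q}
        ∩ ({μ | ∑ q : S × S, μ q = 1} ∩ ({μ | ∀ s, ∑ a, μ (s, a) = m s}
        ∩ {μ | ∀ a, ∑ s, μ (s, a) = m a})) := by
      ext μ; simp only [IsCopula, Set.mem_setOf_eq, Set.mem_inter_iff]
    rw [this]
    exact h1.inter (h2.inter (h3.inter h4))
  · refine (Metric.isBounded_iff_subset_closedBall 0).2 ⟨1, fun μ hμ => ?_⟩
    obtain ⟨h0, h1, -, -⟩ := hμ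
    simp only [Metric.mem_closedBall, dist_zero_right]
    refine (pi_norm_le_iff_of_nonneg zero_le_one).2 fun q => ?_
    rw [Real.norm_eq_abs, abs_of_nonneg (h0 q)]
    calc μ q ≤ ∑ p : S × S, μ p := Finset.single_le_sum (fun p _ => h0 p) (Finset.mem_univ q)
      _ = 1 := h1

end aux

theorem stmt4 {S B : Type*} [Fintype S] [DecidableEq S] (hS : 1 < Fintype.card S)
    [Fintype B] [Nonempty B]
    (m : S → ℝ) (hm : ∀ s, 0 < m s) (hm1 : ∑ s, m s = 1)
    (u1 : S × B → ℝ)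
    (y0 ybar : S → B → ℝ) (hy0 : IsStrategy y0) (hybar : IsStrategy ybar)
    (hy0strict : ∀ μ : S × S → ℝ, IsCopula m μ → μ ≠ mu0 m →
      Upay u1 (mu0 m) y0 > Upay u1 μ y0)
    (hybarC1 : ∀ μ : S × S → ℝ, IsCopula m μ → Upay u1 (mu0 m) ybar ≥ Upay u1 μ ybar)
    (ε : ℝ) (hε0 : 0 < ε) (hε1 : ε ≤ 1)
    (y : S → B → ℝ) (hy : ∀ a b, y a b = ε * y0 a b + (1 - ε) * ybar a b)
    (c1 c2 : ℝ)
    (hc1 : IsLeast {x : ℝ | ∃ μe ∈ Set.extremePoints ℝ {μ : S × S → ℝ | IsCopula m μ},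
      μe ≠ mu0 m ∧ x = Upay u1 (mu0 m) y0 - Upay u1 μe y0} c1)
    (hc2 : IsGreatest {x : ℝ | ∃ μe ∈ Set.extremePoints ℝ {μ : S × S → ℝ | IsCopula m μ},
      μe ≠ mu0 m ∧ x = l1dist μe (mu0 m)} c2) :
    0 < c1 ∧ 0 < c2 ∧
      ∀ μ : S × S → ℝ, IsCopula m μ →
        Upay u1 (mu0 m) y - Upay u1 μ y ≥ ε * c1 / c2 * l1dist μ (mu0 m) := by
  set K : Set (S × S → ℝ) := {μ | IsCopula m μ} with hK
  -- c1 > 0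
  have hc1pos : 0 < c1 := by
    obtain ⟨μe, hμeE, hne, hval⟩ := hc1.1
    have hcop : μe ∈ K := extremePoints_subset hμeE
    have := hy0strict μe hcop hne
    rw [hval]; linarith
  -- c2 > 0
  have hc2pos : 0 < c2 := by
    obtain ⟨νe, hνeE, hne, hval⟩ := hc2.1
    obtain ⟨q, hq⟩ := Function.ne_iff.mp hne
    rw [hval]
    exact Finset.sum_pos' (fun p _ => abs_nonneg _)
      ⟨q, Finset.mem_univ q, abs_pos.2 (sub_ne_zero.2 hq)⟩
  refine ⟨hc1pos, hc2pos, ?_⟩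
  set D : ℝ := ε * c1 / c2 with hDdef
  have hD : 0 ≤ D := by positivity
  set P : Set (S × S → ℝ) :=
    {ν | 0 ≤ Upay u1 (mu0 m) y - Upay u1 ν y - D * l1dist ν (mu0 m)} with hP
  -- extreme points are in P
  have hEP : K.extremePoints ℝ ⊆ P := by
    intro νe hνeE
    by_cases hne : νe = mu0 m
    · subst hne
      simp [hP, Set.mem_setOf_eq, l1dist, sub_self]
    · have hcop : νe ∈ K := extremePoints_subset hνeE
      have h1 : c1 ≤ Upay u1 (mu0 m) y0 - Upay u1 νe y0 := hc1.2 ⟨νe, hνeE, hne, rfl⟩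
      have h2 : l1dist νe (mu0 m) ≤ c2 := hc2.2 ⟨νe, hνeE, hne, rfl⟩
      have h3 : 0 ≤ Upay u1 (mu0 m) ybar - Upay u1 νe ybar :=
        sub_nonneg.2 (hybarC1 νe hcop)
      have e1 := upay_ycombo u1 (mu0 m) ε y0 ybar y hy
      have e2 := upay_ycombo u1 νe ε y0 ybar y hy
      have key : D * l1dist νe (mu0 m) ≤ ε * c1 := by
        calc D * l1dist νe (mu0 m) ≤ D * c2 := mul_le_mul_of_nonneg_left h2 hD
          _ = ε * c1 := by rw [hDdef]; field_simp
      have f1 : ε * c1 ≤ ε * (Upay u1 (mu0 m) y0 - Upay u1 νe y0) :=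
        mul_le_mul_of_nonneg_left h1 hε0.le
      have f2 : 0 ≤ (1 - ε) * (Upay u1 (mu0 m) ybar - Upay u1 νe ybar) :=
        mul_nonneg (by linarith) h3
      show 0 ≤ Upay u1 (mu0 m) y - Upay u1 νe y - D * l1dist νe (mu0 m)
      rw [e1, e2]
      nlinarith [f1, f2, key]
  -- P is convex
  have hPconv : Convex ℝ P := by
    intro x hx z hz a b ha hb hab
    have hx' : 0 ≤ Upay u1 (mu0 m) y - Upay u1 x y - D * l1dist x (mu0 m) := hx
    have hz' : 0 ≤ Upay u1 (mu0 m) y - Upay u1 z y - D * l1dist z (mu0 m) := hz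
    have l1 := l1_combo x z (mu0 m) a b ha hb hab
    have lu := upay_lin u1 x z a b y
    show 0 ≤ Upay u1 (mu0 m) y - Upay u1 (a • x + b • z) y
        - D * l1dist (a • x + b • z) (mu0 m)
    have hl : D * l1dist (a • x + b • z) (mu0 m)
        ≤ D * (a * l1dist x (mu0 m) + b * l1dist z (mu0 m)) :=
      mul_le_mul_of_nonneg_left l1 hD
    rw [lu]
    have hU : a * Upay u1 (mu0 m) y + b * Upay u1 (mu0 m) y = Upay u1 (mu0 m) y := by
      rw [← add_mul, hab, one_mul]
    nlinarith [hl, mul_nonneg ha hx', mul_nonneg hb hz', hU]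
  -- P is closed
  have hPclosed : IsClosed P := by
    apply isClosed_le continuous_const
    apply Continuous.sub
    · apply Continuous.sub continuous_const
      exact continuous_finset_sum _ fun s _ => continuous_finset_sum _ fun a _ =>
        (continuous_apply (s, a)).mul continuous_const
    · exact continuous_const.mul (continuous_finset_sum _ fun q _ =>
        ((continuous_apply q).sub continuous_const).abs)
  -- Krein–Milman
  have hKM : closure (convexHull ℝ (K.extremePoints ℝ)) = K :=
    closure_convexHull_extremePoints (copula_compact m) (copula_convex m)
  have hKP : K ⊆ P := by
    rw [← hKM]
    calc closure (convexHull ℝ (K.extremePoints ℝ))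
        ⊆ closure P := closure_mono (convexHull_min hEP hPconv)
      _ = P := hPclosed.closure_eq
  intro μ hμ
  have := hKP hμ
  have h : 0 ≤ Upay u1 (mu0 m) y - Upay u1 μ y - D * l1dist μ (mu0 m) := this
  rw [hDdef] at h
  linarith
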